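/- Mutual blocking of perpendicular spanning clusters: let X be an occupied NE path spanning rectangle R₁ = Λ_{a,b} (connecting its two sides parallel to −e₁+e₂), and let Y, Z be occupied NW paths spanning rectangles R₂, R₃ of shape Λ_{c,d} (with 2c < a, d > b) positioned at the two ends of R₁ as described. Then under the spiral model dynamics, the first time τ_{X̃} at which any site of X̃ = X ∖ (R₂ ∪ R₃) becomes empty satisfies τ_{X̃} ≥ τ_{Y∪Z} + 1, where τ_{Y∪Z} is the first time any site of Y ∪ Z becomes empty. -/

import Mathlib

open scoped Classical ENNReal

/-- A site of the two-dimensional lattice. -/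
abbrev Site : Type := ℤ × ℤ
/-- A configuration: `true` = occupied, `false` = empty. -/
abbrev Config : Type := Site → Bool

def e1 : Site := (1, 0)
def e2 : Site := (0, 1)

/-- Both sites `a` and `b` are empty in `η`. -/
def emptyPair (η : Config) (a b : Site) : Prop := η a = false ∧ η b = false

/-- The spiral model constraint `𝒜ₓ`: (both NE or both SW neighbours empty) and
(both NW or both SE neighbours empty). -/
def constraintA (η : Config) (x : Site) : Prop :=
  (emptyPair η (x + e2) (x + e1 + e2) ∨ emptyPair η (x - e2) (x - e1 - e2)) ∧
  (emptyPair η (x - e1) (x - e1 + e2) ∨ emptyPair η (x + e1) (x + e1 - e2))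

/-- The spiral model update operator: an occupied site is emptied iff the constraint holds;
empty sites stay empty. -/
noncomputable def T (η : Config) : Config := fun x =>
  if η x = true ∧ ¬ constraintA η x then true else false

/-- Tilted rectangle with center `(cu, cv)` in diagonal coordinates `u = x+y`, `v = y−x`,
half-extent `ha` along `e₁+e₂` and `hb` along `−e₁+e₂`. -/
def Rect (cu cv : ℤ) (ha hb : ℕ) : Set Site :=
  {p | |p.1 + p.2 - cu| ≤ (ha : ℤ) ∧ |p.2 - p.1 - cv| ≤ (hb : ℤ)}

/-- The first time at which at least one site of `A` is empty (`⊤` if never). -/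
noncomputable def firstEmptyTime (η : Config) (A : Set Site) : ℕ∞ :=
  sInf ((fun m : ℕ => (m : ℕ∞)) '' {m : ℕ | ∃ p ∈ A, (T^[m] η) p = false})

lemma T_true_of (η : Config) (x : Site) (h1 : η x = true) (h2 : ¬ constraintA η x) :
    T η x = true := by simp [T, h1, h2]

lemma not_constraintA_V (η : Config) (x : Site)
    (h1 : η (x + e2) = true ∨ η (x + e1 + e2) = true)
    (h2 : η (x - e2) = true ∨ η (x - e1 - e2) = true) :
    ¬ constraintA η x := by
  rintro ⟨hv, -⟩
  rcases hv with ⟨ha, hb⟩ | ⟨ha, hb⟩ <;> rcases h1 with h | h <;> rcases h2 with h' | h' <;>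
    simp_all

lemma not_constraintA_H (η : Config) (x : Site)
    (h1 : η (x - e1) = true ∨ η (x - e1 + e2) = true)
    (h2 : η (x + e1) = true ∨ η (x + e1 - e2) = true) :
    ¬ constraintA η x := by
  rintro ⟨-, hh⟩
  rcases hh with ⟨ha, hb⟩ | ⟨ha, hb⟩ <;> rcases h1 with h | h <;> rcases h2 with h' | h' <;>
    simp_all

/-- A NE path and a NW path crossing a common region must intersect, either at a lattice
point or at a half-integer crossing. -/
lemma crossing (n m : ℕ) (X W : ℕ → Site) (b d : ℤ) (hbd : b < d)
    (hX : ∀ i < n, X (i + 1) = X i + e2 ∨ X (i + 1) = X i + e1 + e2)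
    (hW : ∀ k < m, W (k + 1) = W k - e1 ∨ W (k + 1) = W k - e1 + e2)
    (hXv : ∀ i ≤ n, |(X i).2 - (X i).1| ≤ b)
    (hWu : ∀ k ≤ m, (X 0).1 + (X 0).2 ≤ (W k).1 + (W k).2 ∧
      (W k).1 + (W k).2 ≤ (X n).1 + (X n).2)
    (hW0 : (W 0).2 - (W 0).1 = -d) (hWm : (W m).2 - (W m).1 = d) :
    ∃ i ≤ n, ∃ k, (0 < k ∧ k < m ∧ X i = W k) ∨
      (i < n ∧ k < m ∧ X (i + 1) = X i + e1 + e2 ∧ W k = X i + e1 ∧ W (k + 1) = X i + e2) := by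
  -- step structure of the paths
  have hXs : ∀ i < n, (X (i+1)).2 = (X i).2 + 1 ∧
      ((X (i+1)).1 = (X i).1 ∨ (X (i+1)).1 = (X i).1 + 1) := by
    intro i hi
    rcases hX i hi with h | h <;> rw [h] <;> simp [e1, e2]
  have hWs : ∀ k < m, (W (k+1)).1 = (W k).1 - 1 ∧
      ((W (k+1)).2 = (W k).2 ∨ (W (k+1)).2 = (W k).2 + 1) := by
    intro k hk
    rcases hW k hk with h | h <;> rw [h] <;> simp [e1, e2]
  have hXy : ∀ i ≤ n, (X i).2 = (X 0).2 + i := by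
    intro i hi
    induction i with
    | zero => simp
    | succ i ih =>
      have h1 := (hXs i (by omega)).1
      have h2 := ih (by omega)
      push_cast
      omega
  have hWymono : ∀ k l, k ≤ l → l ≤ m → (W k).2 ≤ (W l).2 := by
    intro k l hkl hlm
    induction l, hkl using Nat.le_induction with
    | base => exact le_rfl
    | succ l hkl ih =>
      have := (hWs l (by omega)).2
      have := ih (by omega)
      omega
  have hyn : (X n).2 = (X 0).2 + n := hXy n le_rfl
  -- index along X corresponding to a height
  set iOf : ℕ → ℕ := fun k => ((W k).2 - (X 0).2).toNat with hiOfdef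
  have hiOf : ∀ k, (X 0).2 ≤ (W k).2 → (W k).2 ≤ (X n).2 →
      iOf k ≤ n ∧ (X (iOf k)).2 = (W k).2 := by
    intro k h1 h2
    have hle : iOf k ≤ n := by simp only [hiOfdef]; omega
    refine ⟨hle, ?_⟩
    rw [hXy _ hle]
    simp only [hiOfdef]
    omega
  have hvX0 := hXv 0 (Nat.zero_le n)
  have hvXn := hXv n le_rfl
  rw [abs_le] at hvX0 hvXn
  -- k₀ : first index of W at or above the bottom of X
  have hm0 : (X 0).2 ≤ (W m).2 := by
    have h1 := (hWu m le_rfl).1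
    omega
  have hex0 : ∃ k, (X 0).2 ≤ (W k).2 := ⟨m, hm0⟩
  set k0 := Nat.find hex0 with hk0def
  have hk0m : k0 ≤ m := Nat.find_le hm0
  have hk0 : (X 0).2 ≤ (W k0).2 := Nat.find_spec hex0
  have hk0min : ∀ k < k0, (W k).2 < (X 0).2 := fun k hk => lt_of_not_ge (Nat.find_min hex0 hk)
  have hk0top : (W k0).2 ≤ (X n).2 := by
    rcases Nat.eq_zero_or_pos k0 with h0 | h0
    · rw [h0]
      have := (hWu 0 (Nat.zero_le m)).2
      omega
    · have h1 := hk0min (k0 - 1) (by omega)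
      have h2 := (hWs (k0 - 1) (by omega)).2
      rw [show k0 - 1 + 1 = k0 by omega] at h2
      omega
  have hhk0 : 0 ≤ (W k0).1 - (X (iOf k0)).1 := by
    obtain ⟨hin, hy⟩ := hiOf k0 hk0 hk0top
    have hv := hXv (iOf k0) hin
    rw [abs_le] at hv
    rcases Nat.eq_zero_or_pos k0 with h0 | h0
    · rw [h0] at hy hv ⊢
      omega
    · have h1 := hk0min (k0 - 1) (by omega)
      have h2 := (hWs (k0 - 1) (by omega)).2
      rw [show k0 - 1 + 1 = k0 by omega] at h2
      have hu := (hWu k0 hk0m).1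
      have hi0 : iOf k0 = 0 := by simp only [hiOfdef]; omega
      rw [hi0]
      omega
  -- k_c : first index at or after k₀ where W has passed above X or drifted left of X
  have hcm : k0 ≤ m ∧ ((X n).2 < (W m).2 ∨ (W m).1 - (X (iOf m)).1 ≤ 0) := by
    refine ⟨hk0m, ?_⟩
    by_cases hy : (W m).2 ≤ (X n).2
    · right
      obtain ⟨hin, hyy⟩ := hiOf m hm0 hy
      have hv := hXv _ hin
      rw [abs_le] at hv
      omega
    · left; omega
  have hexc : ∃ k, k0 ≤ k ∧ ((X n).2 < (W k).2 ∨ (W k).1 - (X (iOf k)).1 ≤ 0) := ⟨m, hcm⟩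
  set kc := Nat.find hexc with hkcdef
  have hkcm : kc ≤ m := Nat.find_le hcm
  have hkc := Nat.find_spec hexc
  rw [← hkcdef] at hkc
  have hkcmin : ∀ k, k0 ≤ k → k < kc → (W k).2 ≤ (X n).2 ∧ 1 ≤ (W k).1 - (X (iOf k)).1 := by
    intro k h1 h2
    have h3 := Nat.find_min hexc h2
    push_neg at h3
    obtain ⟨h4, h5⟩ := h3 h1
    exact ⟨h4, by omega⟩
  have hykc : (W kc).2 ≤ (X n).2 := by
    by_contra hgt
    push_neg at hgt
    have hne : kc ≠ k0 := by intro h; rw [h] at hgt; omega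
    obtain ⟨h1a, h1b⟩ := hkcmin (kc - 1) (by omega) (by omega)
    have h2 := (hWs (kc - 1) (by omega)).2
    rw [show kc - 1 + 1 = kc by omega] at h2
    have hy1 : (W (kc-1)).2 = (X n).2 := by omega
    have hge : (X 0).2 ≤ (W (kc-1)).2 := le_trans hk0 (hWymono k0 (kc-1) (by omega) (by omega))
    have hin : iOf (kc-1) = n := by simp only [hiOfdef]; omega
    have hu := (hWu (kc-1) (by omega)).2
    rw [hin] at h1b
    omega
  have hkc2 : (W kc).1 - (X (iOf kc)).1 ≤ 0 := (hkc.2).resolve_left (not_lt.mpr hykc)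
  have hykc0 : (X 0).2 ≤ (W kc).2 := le_trans hk0 (hWymono k0 kc hkc.1 hkcm)
  -- helper to produce a lattice crossing
  have mkLat : ∀ k ≤ m, (X 0).2 ≤ (W k).2 → (W k).2 ≤ (X n).2 →
      (W k).1 - (X (iOf k)).1 = 0 →
      ∃ i ≤ n, ∃ k', (0 < k' ∧ k' < m ∧ X i = W k') ∨
        (i < n ∧ k' < m ∧ X (i + 1) = X i + e1 + e2 ∧ W k' = X i + e1 ∧
          W (k' + 1) = X i + e2) := by
    intro k hkm h1 h2 h3
    obtain ⟨hin, hy⟩ := hiOf k h1 h2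
    have hXW : X (iOf k) = W k := by
      rw [Prod.ext_iff]
      exact ⟨by omega, hy⟩
    have hv := hXv _ hin
    rw [abs_le] at hv
    have hk0' : 0 < k := by
      rcases Nat.eq_zero_or_pos k with rfl | h
      · exfalso
        have : (X (iOf 0)).2 - (X (iOf 0)).1 = -d := by rw [hXW]; exact hW0
        omega
      · exact h
    have hkm' : k < m := by
      rcases lt_or_eq_of_le hkm with h | h
      · exact h
      · exfalso
        subst h
        have : (X (iOf k)).2 - (X (iOf k)).1 = d := by rw [hXW]; exact hWm
        omega
    exact ⟨iOf k, hin, k, Or.inl ⟨hk0', hkm', hXW⟩⟩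
  -- main case analysis
  rcases eq_or_lt_of_le hkc.1 with heq | hlt
  · apply mkLat kc hkcm hykc0 hykc
    rw [heq] at hhk0
    omega
  · obtain ⟨hy1, hh1⟩ := hkcmin (kc - 1) (by omega) (by omega)
    have hy1ge : (X 0).2 ≤ (W (kc-1)).2 := le_trans hk0 (hWymono _ _ (by omega) (by omega))
    obtain ⟨hin1, hyy1⟩ := hiOf (kc-1) hy1ge hy1
    obtain ⟨hinc, hyyc⟩ := hiOf kc hykc0 hykc
    have hWstep := hW (kc-1) (by omega)
    have hWs1 := hWs (kc-1) (by omega)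
    rw [show kc - 1 + 1 = kc by omega] at hWstep hWs1
    rcases hWs1.2 with hy0 | hy0
    · -- W made a horizontal step
      have hieq : iOf kc = iOf (kc-1) := by simp only [hiOfdef]; omega
      rw [hieq] at hkc2
      apply mkLat kc hkcm hykc0 hykc
      rw [hieq]
      have := hWs1.1
      omega
    · -- W made a diagonal step
      have hieq : iOf kc = iOf (kc-1) + 1 := by simp only [hiOfdef]; omega
      have hiltn : iOf (kc-1) < n := by omega
      have hXstep2 := hXs (iOf (kc-1)) hiltn
      rw [← hieq] at hXstep2
      rcases hXstep2.2 with hx0 | hx0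
      · apply mkLat kc hkcm hykc0 hykc
        have := hWs1.1
        omega
      · by_cases hh2 : (W (kc-1)).1 - (X (iOf (kc-1))).1 = 1
        · -- half-integer crossing
          have hWe1 : W (kc-1) = X (iOf (kc-1)) + e1 := by
            rw [Prod.ext_iff]
            constructor
            · simp [e1]; omega
            · simp [e1]; omega
          refine ⟨iOf (kc-1), le_of_lt hiltn, kc - 1,
            Or.inr ⟨hiltn, by omega, ?_, hWe1, ?_⟩⟩
          · rcases hX _ hiltn with h | h
            · exfalso
              have := congrArg Prod.fst h
              simp [e2] at this
              rw [← hieq] at this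
              omega
            · rw [← hieq] at h ⊢
              exact h
          · rcases hWstep with h | h
            · exfalso
              have := congrArg Prod.snd h
              simp [e1] at this
              omega
            · rw [show kc - 1 + 1 = kc by omega, h, hWe1]
              abel
        · apply mkLat kc hkcm hykc0 hykc
          have := hWs1.1
          omega

theorem mutual_blocking (a b c d : ℕ) (hc : 2 * c < a) (hd : b < d)
    (η : Config) (n m m' : ℕ) (X Y Z : ℕ → Site)
    -- X : occupied NE path spanning R₁ = Rect 0 0 a b
    (hXstep : ∀ i < n, X (i + 1) = X i + e2 ∨ X (i + 1) = X i + e1 + e2)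
    (hXin : ∀ i ≤ n, X i ∈ Rect 0 0 a b)
    (hXocc : ∀ i ≤ n, η (X i) = true)
    (hXend0 : (X 0).1 + (X 0).2 = -(a : ℤ)) (hXendn : (X n).1 + (X n).2 = (a : ℤ))
    -- Y : occupied NW path spanning R₂ = Rect (a−c) 0 c d
    (hYstep : ∀ i < m, Y (i + 1) = Y i - e1 ∨ Y (i + 1) = Y i - e1 + e2)
    (hYin : ∀ i ≤ m, Y i ∈ Rect ((a : ℤ) - c) 0 c d)
    (hYocc : ∀ i ≤ m, η (Y i) = true)
    (hYend0 : (Y 0).2 - (Y 0).1 = -(d : ℤ)) (hYendm : (Y m).2 - (Y m).1 = (d : ℤ))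
    -- Z : occupied NW path spanning R₃ = Rect (−(a−c)) 0 c d
    (hZstep : ∀ i < m', Z (i + 1) = Z i - e1 ∨ Z (i + 1) = Z i - e1 + e2)
    (hZin : ∀ i ≤ m', Z i ∈ Rect (-((a : ℤ) - c)) 0 c d)
    (hZocc : ∀ i ≤ m', η (Z i) = true)
    (hZend0 : (Z 0).2 - (Z 0).1 = -(d : ℤ)) (hZendm : (Z m').2 - (Z m').1 = (d : ℤ)) :
    firstEmptyTime η
        ({p | ∃ i ≤ n, p = X i} \ (Rect ((a : ℤ) - c) 0 c d ∪ Rect (-((a : ℤ) - c)) 0 c d)) ≥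
      firstEmptyTime η ({p | ∃ i ≤ m, p = Y i} ∪ {p | ∃ i ≤ m', p = Z i}) + 1 := by
  have hca : (2 * c : ℤ) < a := by exact_mod_cast hc
  have hdb : (b : ℤ) < d := by exact_mod_cast hd
  -- basic facts about X
  have hXv : ∀ i ≤ n, |(X i).2 - (X i).1| ≤ (b : ℤ) := by
    intro i hi
    have h := hXin i hi
    simp only [Rect, Set.mem_setOf_eq] at h
    simpa using h.2
  have hXuB : ∀ i ≤ n, |(X i).1 + (X i).2| ≤ (a : ℤ) := by
    intro i hi
    have h := hXin i hi
    simp only [Rect, Set.mem_setOf_eq] at h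
    simpa using h.1
  have hXu : ∀ i j, i ≤ j → j ≤ n →
      (X i).1 + (X i).2 + ((j : ℤ) - i) ≤ (X j).1 + (X j).2 := by
    intro i j hij hjn
    induction j, hij using Nat.le_induction with
    | base => simp
    | succ j hij ih =>
      have h1 := ih (by omega)
      have h2 : (X (j+1)).1 + (X (j+1)).2 = (X j).1 + (X j).2 + 1 ∨
          (X (j+1)).1 + (X (j+1)).2 = (X j).1 + (X j).2 + 2 := by
        rcases hXstep j (by omega) with h | h
        · left
          have := congrArg (fun p : Site => p.1 + p.2) h
          simp [e2] at this
          omega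
        · right
          have := congrArg (fun p : Site => p.1 + p.2) h
          simp [e1, e2] at this
          omega
      push_cast
      omega
  -- crossing with Y at the far end
  have hYu : ∀ k ≤ m, (X 0).1 + (X 0).2 ≤ (Y k).1 + (Y k).2 ∧
      (Y k).1 + (Y k).2 ≤ (X n).1 + (X n).2 := by
    intro k hk
    have h1 := hYin k hk
    simp only [Rect, Set.mem_setOf_eq] at h1
    obtain ⟨hA, -⟩ := h1
    rw [abs_le] at hA
    rw [hXend0, hXendn]
    constructor <;> linarith
  have hZu : ∀ k ≤ m', (X 0).1 + (X 0).2 ≤ (Z k).1 + (Z k).2 ∧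
      (Z k).1 + (Z k).2 ≤ (X n).1 + (X n).2 := by
    intro k hk
    have h1 := hZin k hk
    simp only [Rect, Set.mem_setOf_eq] at h1
    obtain ⟨hA, -⟩ := h1
    rw [abs_le] at hA
    rw [hXend0, hXendn]
    constructor <;> linarith
  have top : ∃ hi ≤ n, (a : ℤ) - 2*c - 1 ≤ (X hi).1 + (X hi).2 ∧
      ((∃ k, 0 < k ∧ k < m ∧ X hi = Y k) ∨ (∃ k, k ≤ m ∧ Y k = X hi + e2)) := by
    obtain ⟨i, hin, k, hcase⟩ :=
      crossing n m X Y b d hdb hXstep hYstep hXv hYu hYend0 hYendm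
    rcases hcase with ⟨h0, hm, hXY⟩ | ⟨hin', hm, hs, he1, he2⟩
    · refine ⟨i, hin, ?_, Or.inl ⟨k, h0, hm, hXY⟩⟩
      have h1 := hYin k (le_of_lt hm)
      simp only [Rect, Set.mem_setOf_eq] at h1
      obtain ⟨hA, -⟩ := h1
      rw [abs_le] at hA
      rw [hXY]
      linarith
    · refine ⟨i, hin, ?_, Or.inr ⟨k + 1, hm, he2⟩⟩
      have h1 := hYin k (le_of_lt hm)
      simp only [Rect, Set.mem_setOf_eq] at h1
      obtain ⟨hA, -⟩ := h1
      rw [abs_le] at hA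
      have := congrArg (fun p : Site => p.1 + p.2) he1
      simp [e1] at this
      linarith
  have bot : ∃ lo ≤ n, (X lo).1 + (X lo).2 ≤ -(a : ℤ) + 2*c + 1 ∧
      ((∃ k, 0 < k ∧ k < m' ∧ X lo = Z k) ∨ (∃ k, k ≤ m' ∧ Z k = X lo - e2)) := by
    obtain ⟨i, hin, k, hcase⟩ :=
      crossing n m' X Z b d hdb hXstep hZstep hXv hZu hZend0 hZendm
    rcases hcase with ⟨h0, hm, hXZ⟩ | ⟨hin', hm, hs, he1, he2⟩
    · refine ⟨i, hin, ?_, Or.inl ⟨k, h0, hm, hXZ⟩⟩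
      have h1 := hZin k (le_of_lt hm)
      simp only [Rect, Set.mem_setOf_eq] at h1
      obtain ⟨hA, -⟩ := h1
      rw [abs_le] at hA
      rw [hXZ]
      linarith
    · refine ⟨i + 1, hin', ?_, Or.inr ⟨k, le_of_lt hm, ?_⟩⟩
      · have h1 := hZin k (le_of_lt hm)
        simp only [Rect, Set.mem_setOf_eq] at h1
        obtain ⟨hA, -⟩ := h1
        rw [abs_le] at hA
        have hu1 := congrArg (fun p : Site => p.1 + p.2) he1
        have hu2 := congrArg (fun p : Site => p.1 + p.2) hs
        simp [e1, e2] at hu1 hu2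
        linarith
      · rw [hs, he1]
        abel
  obtain ⟨hi, hhin, hhiu, hcTop⟩ := top
  obtain ⟨lo, hlon, hlou, hcBot⟩ := bot
  -- the blocking invariant
  have inv : ∀ t : ℕ,
      (∀ s < t, (∀ k ≤ m, T^[s] η (Y k) = true) ∧ (∀ k ≤ m', T^[s] η (Z k) = true)) →
      ∀ j, lo ≤ j → j ≤ hi → T^[t] η (X j) = true := by
    intro t
    induction t with
    | zero => intro _ j _ hj; simpa using hXocc j (le_trans hj hhin)
    | succ t ih =>
      intro H j hjlo hjhi
      have HYZ := H t (Nat.lt_succ_self t)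
      have HX := ih fun s hs => H s (hs.trans (Nat.lt_succ_self t))
      rw [Function.iterate_succ_apply']
      have hjn' : j ≤ n := le_trans hjhi hhin
      apply T_true_of
      · exact HX j hjlo hjhi
      · have upX : j < hi →
            (T^[t] η (X j + e2) = true ∨ T^[t] η (X j + e1 + e2) = true) := by
          intro h
          rcases hXstep j (by omega) with hs | hs
          · left; rw [← hs]; exact HX (j+1) (by omega) (by omega)
          · right; rw [← hs]; exact HX (j+1) (by omega) (by omega)
        have downX : lo < j →
            (T^[t] η (X j - e2) = true ∨ T^[t] η (X j - e1 - e2) = true) := by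
          intro h
          have h2 : j - 1 + 1 = j := by omega
          rcases hXstep (j-1) (by omega) with hs | hs <;> rw [h2] at hs
          · left
            have he : X j - e2 = X (j-1) := by rw [hs]; abel
            rw [he]; exact HX (j-1) (by omega) (by omega)
          · right
            have he : X j - e1 - e2 = X (j-1) := by rw [hs]; abel
            rw [he]; exact HX (j-1) (by omega) (by omega)
        have horizY : ∀ k, 0 < k → k < m → X j = Y k → ¬ constraintA (T^[t] η) (X j) := by
          intro k h0 hm hXY
          apply not_constraintA_H
          · rcases hYstep k hm with hs | hs
            · left
              have he : X j - e1 = Y (k+1) := by rw [hs, hXY]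
              rw [he]; exact HYZ.1 _ (by omega)
            · right
              have he : X j - e1 + e2 = Y (k+1) := by rw [hs, hXY]
              rw [he]; exact HYZ.1 _ (by omega)
          · have h2 : k - 1 + 1 = k := by omega
            rcases hYstep (k-1) (by omega) with hs | hs <;> rw [h2] at hs
            · left
              have he : X j + e1 = Y (k-1) := by rw [hXY, hs]; abel
              rw [he]; exact HYZ.1 _ (by omega)
            · right
              have he : X j + e1 - e2 = Y (k-1) := by rw [hXY, hs]; abel
              rw [he]; exact HYZ.1 _ (by omega)
        have horizZ : ∀ k, 0 < k → k < m' → X j = Z k → ¬ constraintA (T^[t] η) (X j) := by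
          intro k h0 hm hXZ
          apply not_constraintA_H
          · rcases hZstep k hm with hs | hs
            · left
              have he : X j - e1 = Z (k+1) := by rw [hs, hXZ]
              rw [he]; exact HYZ.2 _ (by omega)
            · right
              have he : X j - e1 + e2 = Z (k+1) := by rw [hs, hXZ]
              rw [he]; exact HYZ.2 _ (by omega)
          · have h2 : k - 1 + 1 = k := by omega
            rcases hZstep (k-1) (by omega) with hs | hs <;> rw [h2] at hs
            · left
              have he : X j + e1 = Z (k-1) := by rw [hXZ, hs]; abel
              rw [he]; exact HYZ.2 _ (by omega)
            · right
              have he : X j + e1 - e2 = Z (k-1) := by rw [hXZ, hs]; abel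
              rw [he]; exact HYZ.2 _ (by omega)
        rcases hcBot with ⟨kb, hb0, hbm, hXZb⟩ | ⟨kb, hbm, hZk⟩
        · by_cases hjb : j = lo
          · exact horizZ kb hb0 hbm (by rw [hjb]; exact hXZb)
          · rcases hcTop with ⟨kt, ht0, htm, hXYt⟩ | ⟨kt, htm, hYk⟩
            · by_cases hjt : j = hi
              · exact horizY kt ht0 htm (by rw [hjt]; exact hXYt)
              · exact not_constraintA_V _ _ (upX (by omega)) (downX (by omega))
            · by_cases hjt : j = hi
              · refine not_constraintA_V _ _ ?_ (downX (by omega))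
                left; rw [hjt, ← hYk]; exact HYZ.1 _ htm
              · exact not_constraintA_V _ _ (upX (by omega)) (downX (by omega))
        · rcases hcTop with ⟨kt, ht0, htm, hXYt⟩ | ⟨kt, htm, hYk⟩
          · by_cases hjt : j = hi
            · exact horizY kt ht0 htm (by rw [hjt]; exact hXYt)
            · refine not_constraintA_V _ _ (upX (by omega)) ?_
              by_cases hjb : j = lo
              · left; rw [hjb, ← hZk]; exact HYZ.2 _ hbm
              · exact downX (by omega)
          · refine not_constraintA_V _ _ ?_ ?_
            · by_cases hjt : j = hi
              · left; rw [hjt, ← hYk]; exact HYZ.1 _ htm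
              · exact upX (by omega)
            · by_cases hjb : j = lo
              · left; rw [hjb, ← hZk]; exact HYZ.2 _ hbm
              · exact downX (by omega)
  -- conclusion
  rw [ge_iff_le, firstEmptyTime]
  refine le_sInf ?_
  rintro x ⟨r, ⟨p, hpA, hpf⟩, rfl⟩
  obtain ⟨hpX, hpR⟩ := hpA
  obtain ⟨j, hjn, rfl⟩ := hpX
  have hXju := hXuB j hjn
  have hXjv := hXv j hjn
  rw [abs_le] at hXju hXjv
  have hdv : |(X j).2 - (X j).1 - 0| ≤ (d : ℤ) := by
    rw [sub_zero, abs_le]; constructor <;> linarith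
  have hnotR2 : X j ∉ Rect ((a:ℤ) - c) 0 c d := fun h => hpR (Or.inl h)
  have hnotR3 : X j ∉ Rect (-((a:ℤ) - c)) 0 c d := fun h => hpR (Or.inr h)
  simp only [Rect, Set.mem_setOf_eq, not_and_or, not_le] at hnotR2 hnotR3
  have hu2 : (c : ℤ) < |(X j).1 + (X j).2 - ((a:ℤ) - c)| :=
    hnotR2.resolve_right (not_lt.mpr hdv)
  have hu3 : (c : ℤ) < |(X j).1 + (X j).2 - (-((a:ℤ) - c))| :=
    hnotR3.resolve_right (not_lt.mpr hdv)
  have hu2' : (X j).1 + (X j).2 < (a:ℤ) - 2*c := by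
    rcases lt_abs.mp hu2 with h | h <;> linarith
  have hu3' : -(a:ℤ) + 2*c < (X j).1 + (X j).2 := by
    rcases lt_abs.mp hu3 with h | h <;> linarith
  have hjhi : j ≤ hi := by
    by_contra hgt
    push_neg at hgt
    have h1 := hXu hi j (le_of_lt hgt) hjn
    have h2 : (1 : ℤ) ≤ (j : ℤ) - hi := by omega
    linarith
  have hjlo : lo ≤ j := by
    by_contra hgt
    push_neg at hgt
    have h1 := hXu j lo (le_of_lt hgt) hlon
    have h2 : (1 : ℤ) ≤ (lo : ℤ) - j := by omega
    linarith
  have hbad : ¬ ∀ s < r, (∀ k ≤ m, T^[s] η (Y k) = true) ∧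
      (∀ k ≤ m', T^[s] η (Z k) = true) := by
    intro H
    have := inv r H j hjlo hjhi
    rw [hpf] at this
    cases this
  rw [not_forall] at hbad
  obtain ⟨s, hbad⟩ := hbad
  rw [Classical.not_imp] at hbad
  obtain ⟨hs, hbad2⟩ := hbad
  have hq : ∃ q, (q ∈ ({p | ∃ i ≤ m, p = Y i} ∪ {p | ∃ i ≤ m', p = Z i} : Set Site)) ∧
      T^[s] η q = false := by
    by_cases hA : ∀ k ≤ m, T^[s] η (Y k) = true
    · have hB : ¬ ∀ k ≤ m', T^[s] η (Z k) = true := fun hB => hbad2 ⟨hA, hB⟩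
      push_neg at hB
      obtain ⟨k, hk, hne⟩ := hB
      exact ⟨Z k, Or.inr ⟨k, hk, rfl⟩, by simpa using hne⟩
    · push_neg at hA
      obtain ⟨k, hk, hne⟩ := hA
      exact ⟨Y k, Or.inl ⟨k, hk, rfl⟩, by simpa using hne⟩
  obtain ⟨q, hqmem, hqf⟩ := hq
  have hτ : firstEmptyTime η ({p | ∃ i ≤ m, p = Y i} ∪ {p | ∃ i ≤ m', p = Z i}) ≤ (s : ℕ∞) := by
    rw [firstEmptyTime]
    exact sInf_le ⟨s, ⟨q, hqmem, hqf⟩, rfl⟩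
  calc firstEmptyTime η ({p | ∃ i ≤ m, p = Y i} ∪ {p | ∃ i ≤ m', p = Z i}) + 1
      ≤ (s : ℕ∞) + 1 := add_le_add_left hτ 1
    _ = ((s + 1 : ℕ) : ℕ∞) := by push_cast; ring
    _ ≤ (r : ℕ∞) := by exact_mod_cast hs
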